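/- Let α ∈ (0,1), B(α) = 1 − α + α/Γ(α), T > 0, n ∈ ℕ with n ≥ 1, τ = T/n and t_k = kτ. Let f : [0,T] → ℝ be continuously differentiable. Then for every k ∈ {1,…,n}, the right-endpoint (rectangle) approximation satisfies | (AB I^α f)(t_k) − [ (1−α)/B(α) · f(t_k) + (α τ^α/(B(α)Γ(α+1))) Σ_{j=0}^{k−1} f(t_{j+1}) ((k−j)^α − (k−j−1)^α) ] | ≤ (τ t_k^α/(B(α)Γ(α))) · sup_{s∈[0,t_k]} |f′(s)|. -/

import Mathlib

open Set Finset MeasureTheory intervalIntegral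

/-- Right-endpoint (rectangle) numerical scheme error for the Atangana–Baleanu
fractional integral of a continuously differentiable function `f` on `[0, T]`. -/
theorem atangana_baleanu_integral_rectangle_error
    (α T : ℝ) (hα : α ∈ Set.Ioo (0 : ℝ) 1) (hT : 0 < T)
    (B : ℝ) (hB : B = 1 - α + α / Real.Gamma α)
    (n : ℕ) (hn : 1 ≤ n)
    (f f' : ℝ → ℝ)
    (hf : ∀ s ∈ Set.Icc (0 : ℝ) T, HasDerivWithinAt f (f' s) (Set.Icc (0 : ℝ) T) s)
    (hf' : ContinuousOn f' (Set.Icc (0 : ℝ) T))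
    (τ : ℝ) (hτ : τ = T / n)
    (t : ℕ → ℝ) (ht : ∀ i, t i = (i : ℝ) * τ)
    (k : ℕ) (hk1 : 1 ≤ k) (hkn : k ≤ n) :
    |(((1 - α) / B) * f (t k) +
          (α / (B * Real.Gamma α)) * (∫ s in (0 : ℝ)..t k, f s * (t k - s) ^ (α - 1))) -
        (((1 - α) / B) * f (t k) +
          (α * τ ^ α / (B * Real.Gamma (α + 1))) *
            ∑ j ∈ Finset.range k,
              f (t (j + 1)) * (((k : ℝ) - (j : ℝ)) ^ α - ((k : ℝ) - (j : ℝ) - 1) ^ α))|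
      ≤ (τ * (t k) ^ α / (B * Real.Gamma α)) *
          sSup ((fun s => |f' s|) '' Set.Icc (0 : ℝ) (t k)) := by
  obtain ⟨hα0, hα1⟩ := hα
  have hΓ : 0 < Real.Gamma α := Real.Gamma_pos_of_pos hα0
  have hBpos : 0 < B := by
    have h1 : (0:ℝ) < 1 - α := by linarith
    rw [hB]; positivity
  have hnpos : (0:ℝ) < n := by exact_mod_cast hn
  have hτpos : 0 < τ := by rw [hτ]; positivity
  have hkpos : (0:ℝ) < k := by exact_mod_cast hk1
  have htk_pos : 0 < t k := by rw [ht]; positivity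
  have htkT : t k ≤ T := by
    rw [ht, hτ]
    have hkn' : (k:ℝ) ≤ n := by exact_mod_cast hkn
    calc (k:ℝ) * (T / n) ≤ (n:ℝ) * (T / n) :=
          mul_le_mul_of_nonneg_right hkn' (by positivity)
      _ = T := by field_simp
  have hKsub : Set.Icc (0:ℝ) (t k) ⊆ Set.Icc (0:ℝ) T := Set.Icc_subset_Icc le_rfl htkT
  set M := sSup ((fun s => |f' s|) '' Set.Icc (0 : ℝ) (t k)) with hM
  have hcont : ContinuousOn (fun s => |f' s|) (Set.Icc (0:ℝ) (t k)) := (hf'.mono hKsub).abs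
  have hbdd : BddAbove ((fun s => |f' s|) '' Set.Icc (0:ℝ) (t k)) :=
    (isCompact_Icc.image_of_continuousOn hcont).bddAbove
  have hMbound : ∀ s ∈ Set.Icc (0:ℝ) (t k), |f' s| ≤ M := fun s hs =>
    le_csSup hbdd ⟨s, hs, rfl⟩
  have hM0 : 0 ≤ M := (abs_nonneg _).trans (hMbound 0 ⟨le_rfl, htk_pos.le⟩)
  -- Lipschitz estimate
  have hd : ∀ x ∈ Set.Icc (0:ℝ) (t k), HasDerivWithinAt f (f' x) (Set.Icc (0:ℝ) (t k)) x :=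
    fun x hx => (hf x (hKsub hx)).mono hKsub
  have hLip : ∀ x ∈ Set.Icc (0:ℝ) (t k), ∀ y ∈ Set.Icc (0:ℝ) (t k),
      |f y - f x| ≤ M * |y - x| := by
    intro x hx y hy
    have := Convex.norm_image_sub_le_of_norm_hasDerivWithin_le hd
      (fun z hz => by simpa [Real.norm_eq_abs] using hMbound z hz) (convex_Icc _ _) hx hy
    simpa [Real.norm_eq_abs] using this
  -- grid points
  have htmem : ∀ j ≤ k, t j ∈ Set.Icc (0:ℝ) (t k) := by
    intro j hj
    constructor
    · rw [ht]; positivity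
    · rw [ht j, ht k]
      exact mul_le_mul_of_nonneg_right (by exact_mod_cast hj) hτpos.le
  have htstep : ∀ j, t (j+1) - t j = τ := by
    intro j; rw [ht, ht]; push_cast; ring
  have htle : ∀ j, t j ≤ t (j+1) := fun j => by
    have := htstep j; nlinarith [hτpos]
  -- integrability facts
  have hg_int : ∀ a b : ℝ, IntervalIntegrable (fun s => (t k - s)^(α-1)) volume a b := by
    intro a b
    have h := (intervalIntegrable_rpow' (a := t k - a) (b := t k - b)
      (by linarith : (-1:ℝ) < α - 1)).comp_sub_left (t k)
    simpa using h
  have hf_cont : ContinuousOn f (Set.Icc (0:ℝ) T) := fun x hx =>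
    (hf x hx).continuousWithinAt
  have hF_int : ∀ a b : ℝ, a ∈ Set.Icc (0:ℝ) (t k) → b ∈ Set.Icc (0:ℝ) (t k) →
      IntervalIntegrable (fun s => f s * (t k - s)^(α-1)) volume a b := by
    intro a b ha hb
    exact (hg_int a b).continuousOn_mul
      (hf_cont.mono ((Set.uIcc_subset_Icc ha hb).trans hKsub))
  -- value of the elementary integrals
  have hg_nonneg : ∀ s, 0 ≤ (t k - s)^(α-1) ∨ True := fun _ => Or.inr trivial
  have hGval : ∀ a b : ℝ, (∫ s in a..b, (t k - s)^(α-1))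
      = ((t k - a)^α - (t k - b)^α)/α := by
    intro a b
    rw [intervalIntegral.integral_comp_sub_left (fun x : ℝ => x^(α-1)) (t k)]
    rw [integral_rpow (Or.inl (by linarith))]
    rw [sub_add_cancel]
  -- per-piece error bound
  have hpiece : ∀ j < k,
      |∫ s in t j..t (j+1), (f s - f (t (j+1))) * (t k - s)^(α-1)|
        ≤ M * τ * ∫ s in t j..t (j+1), (t k - s)^(α-1) := by
    intro j hj
    have hjk : j ≤ k := hj.le
    have hj1k : j + 1 ≤ k := hj
    have hmemj := htmem j hjk
    have hmemj1 := htmem (j+1) hj1k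
    have hab := htle j
    have hsub : Set.Icc (t j) (t (j+1)) ⊆ Set.Icc (0:ℝ) (t k) :=
      Set.Icc_subset_Icc hmemj.1 hmemj1.2
    have hint1 : IntervalIntegrable (fun s => (f s - f (t (j+1))) * (t k - s)^(α-1))
        volume (t j) (t (j+1)) := by
      have h1 := hF_int (t j) (t (j+1)) hmemj hmemj1
      have h2 := (hg_int (t j) (t (j+1))).const_mul (f (t (j+1)))
      simpa [sub_mul] using h1.sub h2
    calc |∫ s in t j..t (j+1), (f s - f (t (j+1))) * (t k - s)^(α-1)|
        ≤ ∫ s in t j..t (j+1), |(f s - f (t (j+1))) * (t k - s)^(α-1)| :=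
          intervalIntegral.abs_integral_le_integral_abs hab
      _ ≤ ∫ s in t j..t (j+1), M * τ * (t k - s)^(α-1) := by
          apply intervalIntegral.integral_mono_on hab hint1.abs
            ((hg_int (t j) (t (j+1))).const_mul (M * τ))
          intro s hs
          have hsK : s ∈ Set.Icc (0:ℝ) (t k) := hsub hs
          have hgpos : 0 ≤ (t k - s)^(α-1) :=
            Real.rpow_nonneg (by linarith [hsK.2]) _
          rw [abs_mul, abs_of_nonneg hgpos]
          apply mul_le_mul_of_nonneg_right _ hgpos
          calc |f s - f (t (j+1))| ≤ M * |s - t (j+1)| := hLip (t (j+1)) hmemj1 s hsK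
            _ ≤ M * τ := by
                apply mul_le_mul_of_nonneg_left _ hM0
                rw [abs_le]
                constructor
                · have := htstep j; linarith [hs.1]
                · linarith [hs.2, hτpos]
      _ = M * τ * ∫ s in t j..t (j+1), (t k - s)^(α-1) := by
          rw [intervalIntegral.integral_const_mul]
  -- decompose the full integral into pieces
  have ht0 : t 0 = 0 := by rw [ht]; simp
  have hsplitF : (∫ s in (0:ℝ)..t k, f s * (t k - s)^(α-1))
      = ∑ j ∈ Finset.range k, ∫ s in t j..t (j+1), f s * (t k - s)^(α-1) := by
    rw [intervalIntegral.sum_integral_adjacent_intervals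
      (fun j hj => hF_int (t j) (t (j+1)) (htmem j hj.le) (htmem (j+1) hj)), ht0]
  -- relate scheme weights to elementary integrals
  have hΓ1 : Real.Gamma (α + 1) = α * Real.Gamma α := Real.Gamma_add_one hα0.ne'
  have hweight : ∀ j < k, τ^α * (((k : ℝ) - (j : ℝ)) ^ α - ((k : ℝ) - (j : ℝ) - 1) ^ α)
      = α * ∫ s in t j..t (j+1), (t k - s)^(α-1) := by
    intro j hj
    have hj1k : (j:ℝ) + 1 ≤ k := by exact_mod_cast hj
    rw [hGval]
    have e1 : t k - t j = ((k:ℝ) - j) * τ := by rw [ht, ht]; ring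
    have e2 : t k - t (j+1) = ((k:ℝ) - j - 1) * τ := by rw [ht, ht]; push_cast; ring
    rw [e1, e2, Real.mul_rpow (by linarith) hτpos.le,
        Real.mul_rpow (by linarith) hτpos.le]
    field_simp
  have hSeq : (α * τ ^ α / (B * Real.Gamma (α + 1))) *
      ∑ j ∈ Finset.range k,
        f (t (j + 1)) * (((k : ℝ) - (j : ℝ)) ^ α - ((k : ℝ) - (j : ℝ) - 1) ^ α)
      = (α / (B * Real.Gamma α)) *
        ∑ j ∈ Finset.range k, f (t (j+1)) * ∫ s in t j..t (j+1), (t k - s)^(α-1) := by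
    rw [hΓ1, Finset.mul_sum, Finset.mul_sum]
    apply Finset.sum_congr rfl
    intro j hj
    have hw := hweight j (Finset.mem_range.mp hj)
    have hαne : α ≠ 0 := hα0.ne'
    have hBne : B ≠ 0 := hBpos.ne'
    have hΓne : Real.Gamma α ≠ 0 := hΓ.ne'
    field_simp
    linear_combination f (t (j + 1)) * hw
  -- the difference as a sum of piece errors
  have hdiff : (α / (B * Real.Gamma α)) * (∫ s in (0 : ℝ)..t k, f s * (t k - s) ^ (α - 1))
      - (α * τ ^ α / (B * Real.Gamma (α + 1))) *
          ∑ j ∈ Finset.range k,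
            f (t (j + 1)) * (((k : ℝ) - (j : ℝ)) ^ α - ((k : ℝ) - (j : ℝ) - 1) ^ α)
      = (α / (B * Real.Gamma α)) *
          ∑ j ∈ Finset.range k,
            ∫ s in t j..t (j+1), (f s - f (t (j+1))) * (t k - s)^(α-1) := by
    rw [hSeq, hsplitF, ← mul_sub, ← Finset.sum_sub_distrib]
    congr 1
    apply Finset.sum_congr rfl
    intro j hj
    have hjk := Finset.mem_range.mp hj
    rw [← intervalIntegral.integral_const_mul, ← intervalIntegral.integral_sub
      (hF_int (t j) (t (j+1)) (htmem j hjk.le) (htmem (j+1) hjk))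
      ((hg_int (t j) (t (j+1))).const_mul _)]
    congr 1
    ext s
    ring
  -- total of the elementary integrals
  have hGsum : ∑ j ∈ Finset.range k, (∫ s in t j..t (j+1), (t k - s)^(α-1))
      = (t k)^α / α := by
    rw [intervalIntegral.sum_integral_adjacent_intervals
      (fun j _ => hg_int (t j) (t (j+1))), ht0, hGval]
    rw [sub_zero, sub_self, Real.zero_rpow hα0.ne', sub_zero]
  -- assemble
  have habs : |(α / (B * Real.Gamma α)) *
      ∑ j ∈ Finset.range k,
        ∫ s in t j..t (j+1), (f s - f (t (j+1))) * (t k - s)^(α-1)|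
      ≤ (α / (B * Real.Gamma α)) * (M * τ * ((t k)^α / α)) := by
    rw [abs_mul, abs_of_nonneg (by positivity : (0:ℝ) ≤ α / (B * Real.Gamma α))]
    apply mul_le_mul_of_nonneg_left _ (by positivity : (0:ℝ) ≤ α / (B * Real.Gamma α))
    calc |∑ j ∈ Finset.range k,
          ∫ s in t j..t (j+1), (f s - f (t (j+1))) * (t k - s)^(α-1)|
        ≤ ∑ j ∈ Finset.range k,
          |∫ s in t j..t (j+1), (f s - f (t (j+1))) * (t k - s)^(α-1)| :=
          Finset.abs_sum_le_sum_abs _ _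
      _ ≤ ∑ j ∈ Finset.range k, M * τ * ∫ s in t j..t (j+1), (t k - s)^(α-1) :=
          Finset.sum_le_sum (fun j hj => hpiece j (Finset.mem_range.mp hj))
      _ = M * τ * ((t k)^α / α) := by rw [← Finset.mul_sum, hGsum]
  have hfinal : (α / (B * Real.Gamma α)) * (M * τ * ((t k)^α / α))
      = (τ * (t k) ^ α / (B * Real.Gamma α)) * M := by
    field_simp
  calc |(((1 - α) / B) * f (t k) +
          (α / (B * Real.Gamma α)) * (∫ s in (0 : ℝ)..t k, f s * (t k - s) ^ (α - 1))) -
        (((1 - α) / B) * f (t k) +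
          (α * τ ^ α / (B * Real.Gamma (α + 1))) *
            ∑ j ∈ Finset.range k,
              f (t (j + 1)) * (((k : ℝ) - (j : ℝ)) ^ α - ((k : ℝ) - (j : ℝ) - 1) ^ α))|
      = |(α / (B * Real.Gamma α)) *
          ∑ j ∈ Finset.range k,
            ∫ s in t j..t (j+1), (f s - f (t (j+1))) * (t k - s)^(α-1)| := by
        rw [← hdiff]; congr 1; ring
    _ ≤ (α / (B * Real.Gamma α)) * (M * τ * ((t k)^α / α)) := habs
    _ = (τ * (t k) ^ α / (B * Real.Gamma α)) * M := hfinal
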